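/- Let A be an invertible symmetric p×p real matrix, and u, v ∈ ℝᵖ with uᵀu > 0 and uᵀv > 0; set w := √(uᵀv/uᵀu)·u − √(uᵀu/uᵀv)·v. Assume γ := uᵀv − vᵀA⁻¹v ≠ 0 and δ := uᵀu + wᵀA⁻¹w + (wᵀA⁻¹v)²/γ ≠ 0. Then the matrix R := A − (1/(uᵀv))·v vᵀ + (1/(uᵀu))·w wᵀ is invertible and tr(R⁻¹) = tr(A⁻¹) + (vᵀA⁻²v)/γ − (1/δ)·wᵀ(A⁻¹ + (A⁻¹ v vᵀ A⁻¹)/γ)² w. -/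

import Mathlib

open Matrix

set_option linter.unusedSectionVars false

variable {n : Type*} [Fintype n] [DecidableEq n]

lemma A2 (M : Matrix n n ℝ) (a b : n → ℝ) : M * vecMulVec a b = vecMulVec (M.mulVec a) b := by
  ext i j
  simp only [mul_apply, vecMulVec_apply, mulVec, dotProduct, Finset.sum_mul]
  exact Finset.sum_congr rfl fun k _ => by ring

lemma A3 (N : Matrix n n ℝ) (a b : n → ℝ) : vecMulVec a b * N = vecMulVec a (Nᵀ.mulVec b) := by
  ext i j
  simp only [mul_apply, vecMulVec_apply, mulVec, dotProduct, Finset.mul_sum, transpose_apply]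
  exact Finset.sum_congr rfl fun k _ => by ring

lemma A1 (a b y : n → ℝ) : (vecMulVec a b).mulVec y = (b ⬝ᵥ y) • a := by
  ext i
  simp only [mulVec, dotProduct, vecMulVec_apply, Pi.smul_apply, smul_eq_mul, Finset.sum_mul,
    Finset.mul_sum]
  exact Finset.sum_congr rfl fun k _ => by ring

lemma trace_vmv (a b : n → ℝ) : (vecMulVec a b).trace = a ⬝ᵥ b := by
  simp [trace, vecMulVec_apply, dotProduct, diag]

lemma dot_trans (M : Matrix n n ℝ) (a b : n → ℝ) : (Mᵀ.mulVec a) ⬝ᵥ b = a ⬝ᵥ M.mulVec b := by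
  rw [← vecMul_transpose, ← dotProduct_mulVec, transpose_transpose]

lemma vmv_mul_vmv (a b c d : n → ℝ) :
    vecMulVec a b * vecMulVec c d = (b ⬝ᵥ c) • vecMulVec a d := by
  ext i j
  simp only [mul_apply, vecMulVec_apply, dotProduct, Matrix.smul_apply, smul_eq_mul, Finset.sum_mul]
  exact Finset.sum_congr rfl fun k _ => by ring

lemma vmv_mul_mul_vmv (x y : n → ℝ) (B : Matrix n n ℝ) :
    vecMulVec x y * B * vecMulVec x y = (y ⬝ᵥ B.mulVec x) • vecMulVec x y := by
  rw [mul_assoc, A2, vmv_mul_vmv]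

lemma trace_mul_vmv_mul (M N : Matrix n n ℝ) (x y : n → ℝ) :
    (M * vecMulVec x y * N).trace = y ⬝ᵥ (N * M).mulVec x := by
  rw [A2, A3, trace_vmv, dotProduct_comm, dot_trans, mulVec_mulVec]

lemma dot_mul_vmv_mul (M N : Matrix n n ℝ) (a b x y : n → ℝ) :
    x ⬝ᵥ (M * vecMulVec a b * N).mulVec y = (x ⬝ᵥ M.mulVec a) * (b ⬝ᵥ N.mulVec y) := by
  rw [A2, A3, A1, dotProduct_smul, dot_trans, smul_eq_mul, mul_comm]

lemma SM (A : Matrix n n ℝ) (hA : IsUnit A) (x y : n → ℝ) (α : ℝ)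
    (h : 1 + α * (y ⬝ᵥ (A⁻¹).mulVec x) ≠ 0) :
    IsUnit (A + α • vecMulVec x y) ∧
      (A + α • vecMulVec x y)⁻¹
        = A⁻¹ - (α / (1 + α * (y ⬝ᵥ (A⁻¹).mulVec x))) • (A⁻¹ * vecMulVec x y * A⁻¹) := by
  have hdet : IsUnit A.det := (isUnit_iff_isUnit_det A).mp hA
  set s := y ⬝ᵥ (A⁻¹).mulVec x with hs
  set β := α / (1 + α * s) with hβ
  have key : (A + α • vecMulVec x y) * (A⁻¹ - β • (A⁻¹ * vecMulVec x y * A⁻¹)) = 1 := by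
    have h1 : A * A⁻¹ = 1 := mul_nonsing_inv A hdet
    have h2 : vecMulVec x y * (A⁻¹ * vecMulVec x y * A⁻¹) = s • (vecMulVec x y * A⁻¹) := by
      calc vecMulVec x y * (A⁻¹ * vecMulVec x y * A⁻¹)
          = (vecMulVec x y * A⁻¹ * vecMulVec x y) * A⁻¹ := by
            rw [← mul_assoc, ← mul_assoc]
        _ = s • (vecMulVec x y * A⁻¹) := by rw [vmv_mul_mul_vmv, smul_mul_assoc]
    have h3 : A * (A⁻¹ * vecMulVec x y * A⁻¹) = vecMulVec x y * A⁻¹ := by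
      rw [← mul_assoc, ← mul_assoc, h1, one_mul]
    rw [mul_sub, add_mul, add_mul, mul_smul_comm, mul_smul_comm, smul_mul_assoc,
      smul_mul_assoc, h1, h2, h3, smul_smul, smul_smul]
    rw [← add_smul]
    have hc : β + β * α * s = α := by rw [hβ]; field_simp
    rw [hc, add_sub_cancel_right]
  refine ⟨?_, inv_eq_right_inv key⟩
  apply (isUnit_iff_isUnit_det _).mpr
  apply IsUnit.of_mul_eq_one (A⁻¹ - β • (A⁻¹ * vecMulVec x y * A⁻¹)).det
  rw [← det_mul, key, det_one]
theorem stmt_17 {p : ℕ} (A : Matrix (Fin p) (Fin p) ℝ) (hA : IsUnit A) (hAsymm : Aᵀ = A)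
    (u v : Fin p → ℝ) (hu : 0 < u ⬝ᵥ u) (huv : 0 < u ⬝ᵥ v)
    (w : Fin p → ℝ)
    (hw : w = Real.sqrt ((u ⬝ᵥ v) / (u ⬝ᵥ u)) • u - Real.sqrt ((u ⬝ᵥ u) / (u ⬝ᵥ v)) • v)
    (γ : ℝ) (hγdef : γ = u ⬝ᵥ v - v ⬝ᵥ (A⁻¹).mulVec v) (hγ : γ ≠ 0)
    (δ : ℝ)
    (hδdef : δ = u ⬝ᵥ u + w ⬝ᵥ (A⁻¹).mulVec w + (w ⬝ᵥ (A⁻¹).mulVec v) ^ 2 / γ)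
    (hδ : δ ≠ 0)
    (R : Matrix (Fin p) (Fin p) ℝ)
    (hR : R = A - (1 / (u ⬝ᵥ v)) • vecMulVec v v + (1 / (u ⬝ᵥ u)) • vecMulVec w w) :
    IsUnit R ∧
      (R⁻¹).trace
        = (A⁻¹).trace + (v ⬝ᵥ (A⁻¹ * A⁻¹).mulVec v) / γ
          - (1 / δ) * (w ⬝ᵥ (((A⁻¹ + (1 / γ) • (A⁻¹ * vecMulVec v v * A⁻¹))
              * (A⁻¹ + (1 / γ) • (A⁻¹ * vecMulVec v v * A⁻¹)))).mulVec w) := by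
  have hc : (u ⬝ᵥ v) ≠ 0 := ne_of_gt huv
  have he : (u ⬝ᵥ u) ≠ 0 := ne_of_gt hu
  have hAinv_symm : (A⁻¹)ᵀ = A⁻¹ := by rw [transpose_nonsing_inv, hAsymm]
  have hsym : v ⬝ᵥ (A⁻¹).mulVec w = w ⬝ᵥ (A⁻¹).mulVec v := by
    rw [← dot_trans A⁻¹ v w, hAinv_symm, dotProduct_comm]
  -- first rank-one update
  have h1val : 1 + (-(1 / (u ⬝ᵥ v))) * (v ⬝ᵥ (A⁻¹).mulVec v) = γ / (u ⬝ᵥ v) := by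
    rw [hγdef]; field_simp; ring
  obtain ⟨hB, hBinv⟩ := SM A hA v v (-(1 / (u ⬝ᵥ v)))
    (by rw [h1val]; exact div_ne_zero hγ hc)
  set B := A + (-(1 / (u ⬝ᵥ v))) • vecMulVec v v with hBdef
  rw [h1val] at hBinv
  have hco : (-(1 / (u ⬝ᵥ v))) / (γ / (u ⬝ᵥ v)) = -(1 / γ) := by field_simp
  rw [hco] at hBinv
  have hBinv' : B⁻¹ = A⁻¹ + (1 / γ) • (A⁻¹ * vecMulVec v v * A⁻¹) := by
    rw [hBinv, neg_smul, sub_neg_eq_add]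
  have hRB : R = B + (1 / (u ⬝ᵥ u)) • vecMulVec w w := by
    rw [hR, hBdef, neg_smul, ← sub_eq_add_neg]
  -- second rank-one update
  have hwBw : w ⬝ᵥ (B⁻¹).mulVec w
      = w ⬝ᵥ (A⁻¹).mulVec w + (1 / γ) * ((w ⬝ᵥ (A⁻¹).mulVec v) * (v ⬝ᵥ (A⁻¹).mulVec w)) := by
    rw [hBinv', add_mulVec, dotProduct_add, smul_mulVec, dotProduct_smul,
      dot_mul_vmv_mul, smul_eq_mul]
  have h2val : 1 + (1 / (u ⬝ᵥ u)) * (w ⬝ᵥ (B⁻¹).mulVec w) = δ / (u ⬝ᵥ u) := by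
    rw [hwBw, hsym, hδdef]; field_simp; ring
  obtain ⟨hRunit, hRinv⟩ := SM B hB w w (1 / (u ⬝ᵥ u))
    (by rw [h2val]; exact div_ne_zero hδ he)
  rw [← hRB] at hRunit hRinv
  rw [h2val] at hRinv
  have hco2 : (1 / (u ⬝ᵥ u)) / (δ / (u ⬝ᵥ u)) = 1 / δ := by
    rw [div_div_div_eq, one_mul, ← mul_one (u ⬝ᵥ u), mul_assoc, one_mul, mul_div_mul_left _ _ he]
  rw [hco2] at hRinv
  refine ⟨hRunit, ?_⟩
  have hTB : (B⁻¹).trace = (A⁻¹).trace + (1 / γ) * (v ⬝ᵥ (A⁻¹ * A⁻¹).mulVec v) := by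
    rw [hBinv', trace_add, trace_smul, trace_mul_vmv_mul, smul_eq_mul]
  rw [← hBinv', hRinv, trace_sub, trace_smul, trace_mul_vmv_mul, hTB, smul_eq_mul]
  ring
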